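/- Let M = {closedBall(cᵢ, rᵢ)}ᵢ₌₁ᵐ be a finite collection of closed balls in ℝᵈ with positive radii and not all centers equal, and let μ_M be its Čech scale (the infimum of λ ≥ 0 such that ⋂ᵢ closedBall(cᵢ, λrᵢ) ≠ ∅). Then the intersection at the Čech scale, ⋂ᵢ closedBall(cᵢ, μ_M·rᵢ), consists of exactly one point. -/
import Mathlib


open Metric EuclideanSpace

/-- At the Čech scale, the intersection of the rescaled balls is a single point. -/
theorem stmt_12 {d m : ℕ} (c : Fin m → EuclideanSpace ℝ (Fin d)) (r : Fin m → ℝ)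
    (hr : ∀ i, 0 < r i) (hc : ∃ i j, c i ≠ c j)
    (μ : ℝ) (hμ : μ = sInf {lam : ℝ | 0 ≤ lam ∧
      (⋂ i, closedBall (c i) (lam * r i)).Nonempty}) :
    ∃ p, (⋂ i, closedBall (c i) (μ * r i)) = {p} := by
  obtain ⟨i0, j0, hij⟩ := hc
  set S : Set ℝ := {lam : ℝ | 0 ≤ lam ∧
      (⋂ i, closedBall (c i) (lam * r i)).Nonempty} with hS
  have hne : (Finset.univ : Finset (Fin m)).Nonempty := ⟨i0, Finset.mem_univ _⟩
  -- S is nonempty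
  have hSne : S.Nonempty := by
    refine ⟨max 0 (Finset.univ.sup' hne fun i => dist (c i0) (c i) / r i),
      le_max_left _ _, c i0, Set.mem_iInter.2 fun i => ?_⟩
    rw [mem_closedBall]
    have h1 : dist (c i0) (c i) / r i ≤
        Finset.univ.sup' hne fun i => dist (c i0) (c i) / r i :=
      Finset.le_sup' (fun i => dist (c i0) (c i) / r i) (Finset.mem_univ i)
    have := (div_le_iff₀ (hr i)).1 (h1.trans (le_max_right 0 _))
    linarith
  have hSbdd : BddBelow S := ⟨0, fun x hx => hx.1⟩
  have hμ0 : 0 ≤ μ := hμ ▸ le_csInf hSne fun x hx => hx.1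
  -- S is upward closed
  have hup : ∀ ⦃a b : ℝ⦄, a ∈ S → a ≤ b → b ∈ S := by
    rintro a b ⟨ha0, p, hp⟩ hab
    refine ⟨ha0.trans hab, p, Set.mem_iInter.2 fun i => ?_⟩
    have := Set.mem_iInter.1 hp i
    rw [mem_closedBall] at this ⊢
    nlinarith [hr i]
  -- every λ > μ is in S
  have hmem : ∀ lam : ℝ, μ < lam → lam ∈ S := by
    intro lam hlam
    obtain ⟨a, haS, halt⟩ := exists_lt_of_csInf_lt (s := S) hSne (hμ ▸ hlam)
    exact hup haS halt.le
  -- intersection at μ is nonempty (compactness)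
  have hKμ : (⋂ i, closedBall (c i) (μ * r i)).Nonempty := by
    have key : (⋂ lam : {l : ℝ // μ < l}, ⋂ i, closedBall (c i) (lam.1 * r i)).Nonempty := by
      have : Nonempty {l : ℝ // μ < l} := ⟨⟨μ + 1, by linarith⟩⟩
      apply IsCompact.nonempty_iInter_of_directed_nonempty_isCompact_isClosed
      · rintro ⟨a, ha⟩ ⟨b, hb⟩
        refine ⟨⟨min a b, lt_min ha hb⟩, ?_, ?_⟩ <;>
        · refine Set.iInter_mono fun i => closedBall_subset_closedBall ?_
          have := hr i
          · nlinarith [min_le_left a b, min_le_right a b]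
      · rintro ⟨a, ha⟩
        exact (hmem a ha).2
      · rintro ⟨a, ha⟩
        refine IsCompact.of_isClosed_subset (isCompact_closedBall (c i0) (a * r i0))
          (isClosed_iInter fun i => Metric.isClosed_closedBall) (Set.iInter_subset _ i0)
      · rintro ⟨a, ha⟩
        exact isClosed_iInter fun i => Metric.isClosed_closedBall
    obtain ⟨p, hp⟩ := key
    refine ⟨p, Set.mem_iInter.2 fun i => ?_⟩
    rw [mem_closedBall]
    have h2 : ∀ lam : ℝ, μ < lam → dist p (c i) ≤ lam * r i := fun lam hlam => by
      have := Set.mem_iInter.1 (Set.mem_iInter.1 hp ⟨lam, hlam⟩) i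
      rwa [mem_closedBall] at this
    by_contra hcon
    push_neg at hcon
    have hε : 0 < (dist p (c i) - μ * r i) / (2 * r i) :=
      div_pos (by linarith) (by linarith [hr i])
    have := h2 (μ + (dist p (c i) - μ * r i) / (2 * r i)) (by linarith)
    have hr2 : (2 * r i) ≠ 0 := by nlinarith [hr i]
    rw [add_mul, div_mul_eq_mul_div, mul_comm (2 : ℝ) (r i), ← div_div,
      mul_div_assoc, div_self (hr i).ne', mul_one] at this
    linarith
  obtain ⟨p, hp⟩ := hKμ
  -- μ > 0
  have hμpos : 0 < μ := by
    rcases hμ0.lt_or_eq with h | h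
    · exact h
    · exfalso
      apply hij
      have hi := Set.mem_iInter.1 hp i0
      have hj := Set.mem_iInter.1 hp j0
      rw [mem_closedBall, ← h, zero_mul] at hi hj
      have : p = c i0 := dist_le_zero.1 hi
      have : p = c j0 := dist_le_zero.1 hj
      rw [← ‹p = c i0›, ‹p = c j0›]
  -- uniqueness
  refine ⟨p, Set.eq_singleton_iff_unique_mem.2 ⟨hp, fun q hq => ?_⟩⟩
  by_contra hne'
  set z := (1/2 : ℝ) • q + (1/2 : ℝ) • p with hz
  have hzlt : ∀ i, dist z (c i) < μ * r i := fun i => by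
    have hqi := Set.mem_iInter.1 hq i
    have hpi := Set.mem_iInter.1 hp i
    have := combo_mem_ball_of_ne hqi hpi hne' (by norm_num : (0:ℝ) < 1/2)
      (by norm_num : (0:ℝ) < 1/2) (by norm_num)
    rwa [mem_ball] at this
  -- build λ < μ in S
  set lam := max 0 (Finset.univ.sup' hne fun i => dist z (c i) / r i) with hlam
  have hlamS : lam ∈ S := by
    refine ⟨le_max_left _ _, z, Set.mem_iInter.2 fun i => ?_⟩
    rw [mem_closedBall]
    have h1 : dist z (c i) / r i ≤ Finset.univ.sup' hne fun i => dist z (c i) / r i :=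
      Finset.le_sup' (fun i => dist z (c i) / r i) (Finset.mem_univ i)
    have := (div_le_iff₀ (hr i)).1 (h1.trans (le_max_right 0 _))
    linarith
  have hlamlt : lam < μ := by
    apply max_lt hμpos
    apply Finset.sup'_lt_iff hne |>.2
    intro i _
    exact (div_lt_iff₀ (hr i)).2 (hzlt i)
  exact absurd (hμ ▸ csInf_le hSbdd hlamS) (not_le.2 hlamlt)
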